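/- arXiv:2303.05292 — 3 statements merged into one kernel-verified Lean document; each statement's English description precedes it below -/
import Mathlib

section
/- Let k ≥ 1, m ≥ 1, and let n_0, …, n_k be non-negative integers with γ = ∑ n_j ≥ 1 and Γ = ∑ (j+1) n_j. Let p be a polynomial with p(z_0) ≠ 0 and let f be meromorphic with a zero of order l ≥ k + m at z_0. Then p·M[f]' − p'·M[f] has a zero of order at least γ·l − (Γ − γ) − 1 at z_0, where M[f] = ∏_{j=0}^{k}(f^{(j)})^{n_j}. -/
open Filter Topology

private lemma an_deriv {g : ℂ → ℂ} {z₀ : ℂ} (hg : AnalyticAt ℂ g z₀) :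
    AnalyticAt ℂ (deriv g) z₀ := by
  obtain ⟨s, hs, h⟩ := hg.exists_mem_nhds_analyticOnNhd
  exact h.deriv z₀ (mem_of_mem_nhds hs)

private lemma deriv_fact {g f : ℂ → ℂ} {z₀ : ℂ} {N : ℕ} (hn : 1 ≤ N)
    (hg : AnalyticAt ℂ g z₀)
    (heq : ∀ᶠ z in nhds z₀, f z = (z - z₀) ^ N * g z) :
    ∀ᶠ z in nhds z₀, deriv f z
      = (z - z₀) ^ (N - 1) * ((N : ℂ) * g z + (z - z₀) * deriv g z) := by
  have hd : deriv f =ᶠ[nhds z₀] deriv (fun z => (z - z₀) ^ N * g z) :=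
    Filter.EventuallyEq.deriv (heq : f =ᶠ[nhds z₀] _)
  filter_upwards [hd, hg.eventually_analyticAt] with z h1 h2
  rw [h1]
  have hpow : HasDerivAt (fun w : ℂ => (w - z₀) ^ N)
      ((N : ℂ) * (z - z₀) ^ (N - 1)) z := by
    simpa using ((hasDerivAt_id z).sub_const z₀).fun_pow N
  rw [(hpow.fun_mul h2.differentiableAt.hasDerivAt).deriv]
  have hNN : (z - z₀) ^ N = (z - z₀) ^ (N - 1) * (z - z₀) := by
    rw [← pow_succ]; congr 1; omega
  rw [hNN]; ring

private lemma order_ge {f g : ℂ → ℂ} {z₀ : ℂ} {N : ℕ} (hg : AnalyticAt ℂ g z₀)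
    (heq : ∀ᶠ z in nhds z₀, f z = (z - z₀) ^ N * g z) :
    ∃ hf : AnalyticAt ℂ f z₀, (N : ℕ∞) ≤ analyticOrderAt f z₀ := by
  have hf : AnalyticAt ℂ f z₀ :=
    (((analyticAt_id.sub analyticAt_const).pow N).mul hg).congr
      (heq.mono fun z h => h.symm)
  refine ⟨hf, ?_⟩
  by_cases htop : analyticOrderAt g z₀ = ⊤
  · have : analyticOrderAt f z₀ = ⊤ := by
      rw [analyticOrderAt_eq_top] at htop ⊢
      filter_upwards [heq, htop] with z h1 h2
      rw [h1, h2, mul_zero]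
    simp [this]
  · lift analyticOrderAt g z₀ to ℕ using htop with d hd
    obtain ⟨h, hh, hhne, hheq⟩ := (hg.analyticOrderAt_eq_natCast (n := d)).mp hd.symm
    have : analyticOrderAt f z₀ = ((N + d : ℕ) : ℕ∞) := by
      rw [hf.analyticOrderAt_eq_natCast]
      refine ⟨h, hh, hhne, ?_⟩
      filter_upwards [heq, hheq] with z h1 h2
      rw [h1, h2, smul_eq_mul, smul_eq_mul, pow_add]; ring
    rw [this]
    exact_mod_cast Nat.cast_le.mpr (Nat.le_add_right N d)

private lemma iter_fact {f : ℂ → ℂ} {z₀ : ℂ} {l : ℕ} (hf : AnalyticAt ℂ f z₀)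
    (hord : analyticOrderAt f z₀ = (l : ℕ∞)) :
    ∀ j, ∃ g : ℂ → ℂ, AnalyticAt ℂ g z₀ ∧ (j < l →
      ∀ᶠ z in nhds z₀, iteratedDeriv j f z = (z - z₀) ^ (l - j) * g z) := by
  intro j
  induction j with
  | zero =>
      obtain ⟨g, hg, hgne, heq⟩ := (hf.analyticOrderAt_eq_natCast (n := l)).mp hord
      exact ⟨g, hg, fun _ => heq.mono fun z h => by
        simpa [iteratedDeriv_zero, smul_eq_mul] using h⟩
  | succ j ih =>
      obtain ⟨g, hg, heq⟩ := ih
      refine ⟨fun z => ((l - j : ℕ) : ℂ) * g z + (z - z₀) * deriv g z,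
        (analyticAt_const.mul hg).add
          ((analyticAt_id.sub analyticAt_const).mul (an_deriv hg)), fun hj => ?_⟩
      have h1 : 1 ≤ l - j := by omega
      have hd := deriv_fact h1 hg (heq (by omega))
      have hsub : l - j - 1 = l - (j + 1) := by omega
      filter_upwards [hd] with z hz
      rw [iteratedDeriv_succ, hz, hsub]

/-- If `f` has a zero of order `l ≥ k + m` at `z₀` and `p` is a polynomial with
`p(z₀) ≠ 0`, then `p·M[f]' - p'·M[f]` has a zero of order at least
`γ·l - (Γ - γ) - 1` at `z₀`, where `M[f] = ∏_{j=0}^{k} (f^{(j)})^{n_j}`. -/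
theorem stmt_8 (k m : ℕ) (hk : 1 ≤ k) (hm : 1 ≤ m) (n : ℕ → ℕ)
    (γ Γ : ℕ)
    (hγ : γ = ∑ j ∈ Finset.range (k + 1), n j) (hγ1 : 1 ≤ γ)
    (hΓ : Γ = ∑ j ∈ Finset.range (k + 1), (j + 1) * n j)
    (p : Polynomial ℂ) (z₀ : ℂ) (hp : p.eval z₀ ≠ 0)
    (f : ℂ → ℂ) (l : ℕ) (hl : k + m ≤ l)
    (hf : AnalyticAt ℂ f z₀) (hord : analyticOrderAt f z₀ = (l : ℕ∞))
    (M : ℂ → ℂ)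
    (hM : M = fun z => ∏ j ∈ Finset.range (k + 1), (iteratedDeriv j f z) ^ (n j)) :
    ∃ hW : AnalyticAt ℂ
        (fun z => p.eval z * deriv M z - (p.derivative).eval z * M z) z₀,
      ((γ * l - (Γ - γ) - 1 : ℕ) : ℕ∞) ≤ analyticOrderAt
        (fun z => p.eval z * deriv M z - (p.derivative).eval z * M z) z₀ := by
  choose g hg hgeq using iter_fact hf hord
  set N : ℕ := ∑ j ∈ Finset.range (k + 1), (l - j) * n j with hNdef
  set G : ℂ → ℂ := fun z => ∏ j ∈ Finset.range (k + 1), (g j z) ^ (n j) with hGdef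
  have hG : AnalyticAt ℂ G z₀ :=
    Finset.analyticAt_fun_prod (f := fun j z => g j z ^ n j) _ fun j _ => (hg j).pow (n j)
  -- M =ᶠ (z - z₀)^N * G
  have hMeq : ∀ᶠ z in nhds z₀, M z = (z - z₀) ^ N * G z := by
    have hall : ∀ᶠ z in nhds z₀, ∀ j ∈ Finset.range (k + 1),
        iteratedDeriv j f z = (z - z₀) ^ (l - j) * g j z := by
      rw [Filter.eventually_all_finset]
      intro j hj
      exact hgeq j (by simp only [Finset.mem_range] at hj; omega)
    filter_upwards [hall] with z hz
    rw [hM]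
    calc (∏ j ∈ Finset.range (k + 1), iteratedDeriv j f z ^ n j)
        = ∏ j ∈ Finset.range (k + 1),
            ((z - z₀) ^ ((l - j) * n j) * (g j z) ^ n j) := by
          refine Finset.prod_congr rfl fun j hj => ?_
          rw [hz j hj, mul_pow, ← pow_mul]
      _ = (z - z₀) ^ N * G z := by
          rw [Finset.prod_mul_distrib, Finset.prod_pow_eq_pow_sum]
  have hN1 : 1 ≤ N := by
    calc 1 ≤ γ := hγ1
      _ = ∑ j ∈ Finset.range (k + 1), n j := hγ
      _ ≤ N := Finset.sum_le_sum fun j hj => by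
          have hjk : j ≤ k := by
            simpa [Nat.lt_succ_iff] using Finset.mem_range.mp hj
          exact Nat.le_mul_of_pos_left (n j) (by omega)
  have hMd := deriv_fact hN1 hG hMeq
  -- the combination
  set H : ℂ → ℂ := fun z => p.eval z * ((N : ℂ) * G z + (z - z₀) * deriv G z)
      - (z - z₀) * (p.derivative.eval z * G z) with hHdef
  have hpan : AnalyticAt ℂ (fun z => p.eval z) z₀ :=
    (AnalyticOnNhd.eval_polynomial (𝕜 := ℂ) p) z₀ (Set.mem_univ _)
  have hp'an : AnalyticAt ℂ (fun z => p.derivative.eval z) z₀ :=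
    (AnalyticOnNhd.eval_polynomial (𝕜 := ℂ) p.derivative) z₀ (Set.mem_univ _)
  have hH : AnalyticAt ℂ H z₀ := by
    apply AnalyticAt.sub
    · exact hpan.mul ((analyticAt_const.mul hG).add
        ((analyticAt_id.sub analyticAt_const).mul (an_deriv hG)))
    · exact (analyticAt_id.sub analyticAt_const).mul (hp'an.mul hG)
  have hWeq : ∀ᶠ z in nhds z₀,
      p.eval z * deriv M z - p.derivative.eval z * M z
        = (z - z₀) ^ (N - 1) * H z := by
    filter_upwards [hMd, hMeq] with z h1 h2
    rw [h1, h2, hHdef]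
    have hNN : (z - z₀) ^ N = (z - z₀) ^ (N - 1) * (z - z₀) := by
      rw [← pow_succ]; congr 1; omega
    rw [hNN]; ring
  obtain ⟨hW, hle⟩ := order_ge hH hWeq
  refine ⟨hW, ?_⟩
  -- arithmetic: γ * l - (Γ - γ) - 1 = N - 1
  have hS : Γ = (∑ j ∈ Finset.range (k + 1), j * n j) + γ := by
    rw [hΓ, hγ, ← Finset.sum_add_distrib]
    exact Finset.sum_congr rfl fun j _ => by ring
  have hγl : N + (∑ j ∈ Finset.range (k + 1), j * n j) = γ * l := by
    rw [hNdef, hγ, Finset.sum_mul, ← Finset.sum_add_distrib]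
    refine Finset.sum_congr rfl fun j hj => ?_
    have hjk : j ≤ k := by simpa [Nat.lt_succ_iff] using Finset.mem_range.mp hj
    have : l - j + j = l := by omega
    rw [← add_mul, this, mul_comm]
  have harr : γ * l - (Γ - γ) - 1 = N - 1 := by omega
  rw [harr]
  exact hle.trans' (by exact_mod_cast le_refl _)
end

section
/- Let f(z) = A/∏_{i=1}^{t}(z + z_i)^{t_i} be a rational function with A ≠ 0, distinct z_1, …, z_t, and positive integers t_i, and let M[f] = ∏_{j=0}^{k}(f^{(j)})^{n_j} with non-negative integers n_j, γ = ∑ n_j ≥ 1, Γ = ∑ (j+1) n_j. Then M[f](z) = g(z)/∏_{i=1}^{t}(z + z_i)^{(t_i−1)γ + Γ}, where g is a polynomial of degree at most (t−1)(Γ − γ) with g(−z_i) ≠ 0 for each i. -/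
open Polynomial Finset

lemma derivative_finset_prod {ι : Type*} [DecidableEq ι] (s : Finset ι) (f : ι → Polynomial ℂ) :
    derivative (∏ i ∈ s, f i) = ∑ i ∈ s, (∏ l ∈ s.erase i, f l) * derivative (f i) := by
  induction s using Finset.induction_on with
  | empty => simp
  | @insert a s' h ih =>
      rw [Finset.prod_insert h, derivative_mul, Finset.sum_insert h, Finset.erase_insert h, ih,
        Finset.mul_sum, mul_comm (derivative (f a))]
      congr 1
      refine Finset.sum_congr rfl fun i hi => ?_
      have hia : i ≠ a := fun hh => h (hh ▸ hi)
      rw [Finset.erase_insert_of_ne hia.symm, Finset.prod_insert (fun hc => h (Finset.mem_of_mem_erase hc))]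
      ring

/-- key derivative identity for products of linear powers -/
lemma key_deriv_prod (t : ℕ) (a : Fin t → ℂ) (e : Fin t → ℕ) (he : ∀ i, 1 ≤ e i) :
    derivative (∏ i, (X + C (a i)) ^ e i) * ∏ i, (X + C (a i)) =
      (∑ i, C ((e i : ℂ)) * ∏ l ∈ Finset.univ.erase i, (X + C (a l))) *
        ∏ i, (X + C (a i)) ^ e i := by
  rw [derivative_finset_prod, Finset.sum_mul, Finset.sum_mul]
  refine Finset.sum_congr rfl fun i _ => ?_
  rw [derivative_pow, derivative_add, derivative_X, derivative_C, add_zero, mul_one]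
  rw [← Finset.prod_erase_mul Finset.univ (fun l => (X + C (a l))) (Finset.mem_univ i),
      ← Finset.prod_erase_mul Finset.univ (fun l => (X + C (a l)) ^ e l) (Finset.mem_univ i)]
  have h : (X + C (a i)) ^ (e i - 1) * (X + C (a i)) = (X + C (a i)) ^ e i := by
    rw [← pow_succ, Nat.sub_add_cancel (he i)]
  rw [← h]; push_cast; ring

noncomputable def Pq (t : ℕ) (zp : Fin t → ℂ) (tp : Fin t → ℕ) (A : ℂ) : ℕ → Polynomial ℂ
  | 0 => C A
  | (j+1) => derivative (Pq t zp tp A j) * (∏ i, (X + C (zp i)))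
      - (Pq t zp tp A j) *
        (∑ i, C (((tp i + j : ℕ) : ℂ)) * ∏ l ∈ Finset.univ.erase i, (X + C (zp l)))

lemma Pq_eval_ne {t : ℕ} (zp : Fin t → ℂ) (hzp : Function.Injective zp)
    (tp : Fin t → ℕ) (htp : ∀ i, 1 ≤ tp i) (A : ℂ) (hA : A ≠ 0) :
    ∀ j i, (Pq t zp tp A j).eval (-zp i) ≠ 0 := by
  intro j
  induction j with
  | zero => intro i; simp [Pq, hA]
  | succ j ih =>
      intro i
      have hQ : (∏ l, (X + C (zp l))).eval (-zp i) = 0 := by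
        rw [eval_prod]
        exact Finset.prod_eq_zero (Finset.mem_univ i) (by simp)
      have hR : (∑ m, C (((tp m + j : ℕ) : ℂ)) *
          ∏ l ∈ Finset.univ.erase m, (X + C (zp l))).eval (-zp i)
          = ((tp i + j : ℕ) : ℂ) * ∏ l ∈ Finset.univ.erase i, (-zp i + zp l) := by
        rw [eval_finset_sum]
        rw [Finset.sum_eq_single i]
        · simp [eval_prod]
        · intro m _ hmi
          have : i ∈ Finset.univ.erase m := Finset.mem_erase.mpr ⟨fun h => hmi h.symm, Finset.mem_univ i⟩
          simp only [eval_mul, eval_C, eval_prod]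
          rw [Finset.prod_eq_zero this (by simp)]
          ring
        · simp
      have hRne : ((tp i + j : ℕ) : ℂ) * ∏ l ∈ Finset.univ.erase i, (-zp i + zp l) ≠ 0 := by
        apply mul_ne_zero
        · exact Nat.cast_ne_zero.mpr (by have := htp i; omega)
        · refine Finset.prod_ne_zero_iff.mpr fun l hl => ?_
          have hli : l ≠ i := (Finset.mem_erase.mp hl).1
          intro h
          exact hli (hzp (by linear_combination h))
      show (derivative (Pq t zp tp A j) * _ - _ * _).eval (-zp i) ≠ 0
      rw [eval_sub, eval_mul, eval_mul, hQ, hR, mul_zero, zero_sub, neg_ne_zero]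
      exact mul_ne_zero (ih i) hRne

lemma Pq_natDegree {t : ℕ} (zp : Fin t → ℂ) (tp : Fin t → ℕ) (A : ℂ) :
    ∀ j, (Pq t zp tp A j).natDegree ≤ j * (t - 1) := by
  intro j
  induction j with
  | zero => simp [Pq]
  | succ j ih =>
      have hQdeg : (∏ i, (X + C (zp i)) : Polynomial ℂ).natDegree ≤ t := by
        refine le_trans (Polynomial.natDegree_prod_le _ _) ?_
        simp [natDegree_X_add_C]
      have hRdeg : (∑ i, C (((tp i + j : ℕ) : ℂ)) *
          ∏ l ∈ Finset.univ.erase i, (X + C (zp l)) : Polynomial ℂ).natDegree ≤ t - 1 := by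
        refine Polynomial.natDegree_sum_le_of_forall_le _ _ fun i _ => ?_
        refine le_trans (natDegree_mul_le) ?_
        simp only [natDegree_C, zero_add]
        refine le_trans (Polynomial.natDegree_prod_le _ _) ?_
        simp [natDegree_X_add_C, Finset.card_erase_of_mem]
      have h1 : (derivative (Pq t zp tp A j) * (∏ i, (X + C (zp i)))).natDegree ≤ (j+1) * (t-1) := by
        by_cases hd : derivative (Pq t zp tp A j) = 0
        · simp [hd]
        · have h2 : 1 ≤ (Pq t zp tp A j).natDegree := by
            rcases Nat.eq_zero_or_pos (Pq t zp tp A j).natDegree with h | h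
            · obtain ⟨c, hc⟩ := Polynomial.natDegree_eq_zero.mp h
              rw [← hc] at hd; simp at hd
            · exact h
          refine le_trans natDegree_mul_le ?_
          have h3 : (derivative (Pq t zp tp A j)).natDegree ≤ (Pq t zp tp A j).natDegree - 1 :=
            natDegree_derivative_le _
          have hmul : (j+1) * (t-1) = j * (t-1) + (t-1) := by ring
          omega
      have h2 : ((Pq t zp tp A j) * (∑ i, C (((tp i + j : ℕ) : ℂ)) *
          ∏ l ∈ Finset.univ.erase i, (X + C (zp l)))).natDegree ≤ (j+1) * (t-1) := by
        refine le_trans natDegree_mul_le ?_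
        have hmul : (j+1) * (t-1) = j * (t-1) + (t-1) := by ring
        omega
      show (derivative (Pq t zp tp A j) * _ - _ * _).natDegree ≤ _
      exact le_trans (natDegree_sub_le _ _) (max_le h1 h2)

lemma Pq_iter {t : ℕ} (zp : Fin t → ℂ) (tp : Fin t → ℕ) (htp : ∀ i, 1 ≤ tp i) (A : ℂ)
    (f : ℂ → ℂ)
    (hf : ∀ z : ℂ, (∀ i, z ≠ -zp i) → f z = A / ∏ i, (z + zp i) ^ (tp i)) :
    ∀ j, ∀ z : ℂ, (∀ i, z ≠ -zp i) →
      iteratedDeriv j f z = (Pq t zp tp A j).eval z / ∏ i, (z + zp i) ^ (tp i + j) := by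
  have hU : IsOpen {w : ℂ | ∀ i, w ≠ -zp i} := by
    have : {w : ℂ | ∀ i, w ≠ -zp i} = ⋂ i, ({-zp i}ᶜ : Set ℂ) := by
      ext w; simp [Set.mem_iInter]
    rw [this]
    exact isOpen_iInter_of_finite fun i => isOpen_compl_singleton
  intro j
  induction j with
  | zero =>
      intro z hz
      simpa [Pq] using hf z hz
  | succ j ih =>
      intro z hz
      have hne : ∀ i, z + zp i ≠ 0 := by
        intro i h
        exact hz i (eq_neg_of_add_eq_zero_left h)
      set P : Polynomial ℂ := Pq t zp tp A j with hP
      set Qj : Polynomial ℂ := ∏ i, (X + C (zp i)) ^ (tp i + j) with hQj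
      set Qp : Polynomial ℂ := ∏ i, (X + C (zp i)) with hQp
      set Rp : Polynomial ℂ :=
        ∑ i, C (((tp i + j : ℕ) : ℂ)) * ∏ l ∈ Finset.univ.erase i, (X + C (zp l)) with hRp
      have hQje : ∀ w : ℂ, Qj.eval w = ∏ i, (w + zp i) ^ (tp i + j) := by
        intro w; simp [hQj, eval_prod]
      have hQpe : Qp.eval z = ∏ i, (z + zp i) := by simp [hQp, eval_prod]
      have hqne : Qj.eval z ≠ 0 := by
        rw [hQje]
        exact Finset.prod_ne_zero_iff.mpr fun i _ => pow_ne_zero _ (hne i)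
      have hQpne : Qp.eval z ≠ 0 := by
        rw [hQpe]
        exact Finset.prod_ne_zero_iff.mpr fun i _ => hne i
      have hEq : iteratedDeriv j f =ᶠ[nhds z] fun w => P.eval w / Qj.eval w := by
        filter_upwards [hU.mem_nhds (show z ∈ {w : ℂ | ∀ i, w ≠ -zp i} from hz)] with w hw
        rw [ih w hw, hQje]
      have hkey : (derivative Qj).eval z * Qp.eval z = Rp.eval z * Qj.eval z := by
        have h := congrArg (eval z)
          (key_deriv_prod t zp (fun i => tp i + j)
            (fun i => le_trans (htp i) (Nat.le_add_right _ _)))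
        simpa only [eval_mul] using h
      have hden : ∏ i, (z + zp i) ^ (tp i + (j+1)) = Qj.eval z * Qp.eval z := by
        rw [hQje, hQpe, ← Finset.prod_mul_distrib]
        refine Finset.prod_congr rfl fun i _ => ?_
        rw [show tp i + (j+1) = (tp i + j) + 1 by omega, pow_succ]
      rw [iteratedDeriv_succ, hEq.deriv_eq]
      rw [deriv_fun_div P.differentiableAt Qj.differentiableAt hqne,
        Polynomial.deriv, Polynomial.deriv]
      have hPsucc : Pq t zp tp A (j+1) = derivative P * Qp - P * Rp := rfl
      rw [hden, hPsucc, eval_sub, eval_mul, eval_mul]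
      rw [div_eq_div_iff (pow_ne_zero 2 hqne) (mul_ne_zero hqne hQpne)]
      linear_combination (-(P.eval z * Qj.eval z)) * hkey

/-- Structural form of the differential monomial of the non-vanishing rational function
`f(z) = A / ∏ᵢ (z + zᵢ)^{tᵢ}`: there is a polynomial `g` of degree at most
`(t-1)(Γ-γ)`, nonvanishing at each `-zᵢ`, with
`M[f](z) = g(z) / ∏ᵢ (z + zᵢ)^{(tᵢ-1)γ + Γ}` away from the poles. -/
theorem stmt_16 (k : ℕ) (hk : 1 ≤ k) (n : ℕ → ℕ)
    (γ Γ : ℕ)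
    (hγ : γ = ∑ j ∈ Finset.range (k + 1), n j) (hγ1 : 1 ≤ γ)
    (hΓ : Γ = ∑ j ∈ Finset.range (k + 1), (j + 1) * n j)
    (t : ℕ) (ht : 1 ≤ t) (A : ℂ) (hA : A ≠ 0)
    (zp : Fin t → ℂ) (hzp : Function.Injective zp)
    (tp : Fin t → ℕ) (htp : ∀ i, 1 ≤ tp i)
    (f : ℂ → ℂ)
    (hf : ∀ z : ℂ, (∀ i, z ≠ -zp i) →
      f z = A / ∏ i, (z + zp i) ^ (tp i)) :
    ∃ g : Polynomial ℂ,
      g.degree ≤ ((t - 1) * (Γ - γ) : ℕ) ∧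
      (∀ i, g.eval (-zp i) ≠ 0) ∧
      ∀ z : ℂ, (∀ i, z ≠ -zp i) →
        ∏ j ∈ Finset.range (k + 1), (iteratedDeriv j f z) ^ (n j) =
          g.eval z / ∏ i, (z + zp i) ^ ((tp i - 1) * γ + Γ) := by
  refine ⟨∏ j ∈ Finset.range (k + 1), (Pq t zp tp A j) ^ (n j), ?_, ?_, ?_⟩
  · -- degree bound
    have hS : ∑ j ∈ Finset.range (k + 1), j * n j + γ = Γ := by
      rw [hγ, hΓ, ← Finset.sum_add_distrib]
      exact Finset.sum_congr rfl fun j _ => by ring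
    have hnat : (∏ j ∈ Finset.range (k + 1), (Pq t zp tp A j) ^ (n j)).natDegree
        ≤ (t - 1) * (Γ - γ) := by
      refine le_trans (Polynomial.natDegree_prod_le _ _) ?_
      have h1 : ∀ j ∈ Finset.range (k + 1),
          ((Pq t zp tp A j) ^ (n j)).natDegree ≤ n j * (j * (t - 1)) := by
        intro j _
        rw [Polynomial.natDegree_pow]
        exact Nat.mul_le_mul_left _ (Pq_natDegree zp tp A j)
      refine le_trans (Finset.sum_le_sum h1) ?_
      have h2 : ∑ j ∈ Finset.range (k + 1), n j * (j * (t - 1))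
          = (t - 1) * ∑ j ∈ Finset.range (k + 1), j * n j := by
        rw [Finset.mul_sum]
        exact Finset.sum_congr rfl fun j _ => by ring
      rw [h2]
      have : ∑ j ∈ Finset.range (k + 1), j * n j = Γ - γ := by omega
      rw [this]
    refine le_trans (Polynomial.degree_le_natDegree) ?_
    exact_mod_cast hnat
  · intro i
    rw [Polynomial.eval_prod]
    refine Finset.prod_ne_zero_iff.mpr fun j _ => ?_
    rw [Polynomial.eval_pow]
    exact pow_ne_zero _ (Pq_eval_ne zp hzp tp htp A hA j i)
  · intro z hz
    have hne : ∀ i, z + zp i ≠ 0 := by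
      intro i h
      exact hz i (eq_neg_of_add_eq_zero_left h)
    have h1 : ∀ j ∈ Finset.range (k+1), (iteratedDeriv j f z) ^ (n j)
        = ((Pq t zp tp A j).eval z) ^ (n j) / (∏ i, (z + zp i) ^ (tp i + j)) ^ (n j) := by
      intro j _
      rw [Pq_iter zp tp htp A f hf j z hz, div_pow]
    rw [Finset.prod_congr rfl h1, Finset.prod_div_distrib]
    congr 1
    · rw [Polynomial.eval_prod]
      exact Finset.prod_congr rfl fun j _ => by simp
    · -- denominator
      have h2 : ∀ j ∈ Finset.range (k+1),
          (∏ i, (z + zp i) ^ (tp i + j)) ^ (n j) = ∏ i, (z + zp i) ^ ((tp i + j) * n j) := by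
        intro j _
        rw [← Finset.prod_pow]
        exact Finset.prod_congr rfl fun i _ => by rw [← pow_mul]
      rw [Finset.prod_congr rfl h2, Finset.prod_comm]
      refine Finset.prod_congr rfl fun i _ => ?_
      rw [Finset.prod_pow_eq_pow_sum]
      congr 1
      have hS : ∑ j ∈ Finset.range (k + 1), j * n j + γ = Γ := by
        rw [hγ, hΓ, ← Finset.sum_add_distrib]
        exact Finset.sum_congr rfl fun j _ => by ring
      have h3 : ∑ j ∈ Finset.range (k + 1), (tp i + j) * n j
          = tp i * γ + ∑ j ∈ Finset.range (k + 1), j * n j := by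
        rw [hγ, Finset.mul_sum, ← Finset.sum_add_distrib]
        exact Finset.sum_congr rfl fun j _ => by ring
      have h4 : tp i * γ = (tp i - 1) * γ + γ := by
        rcases Nat.exists_eq_add_of_le (htp i) with ⟨m, hm⟩
        rw [hm, Nat.add_sub_cancel_left]
        ring
      omega
end

section
/- Let f be a non-constant, non-vanishing rational function on ℂ (so f has at least one pole) and let p be a polynomial, p ≢ 0. Let M[f] = ∏_{j=0}^{k}(f^{(j)})^{n_j} with k ≥ 1 and non-negative integers n_j, ∑_{j=0}^{k} n_j ≥ 1, and weight Γ_M = ∑_{j=0}^{k}(j+1)n_j. Then the function M[f] − p has at least Γ_M distinct zeros in ℂ. -/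
open Polynomial UniqueFactorizationMonoid


noncomputable def auxA (p q : Polynomial ℂ) : ℕ → Polynomial ℂ
  | 0 => p
  | (j+1) => derivative (auxA p q j) * q - C ((j : ℂ) + 1) * auxA p q j * derivative q

lemma auxA_deg (p q : Polynomial ℂ) (c : ℂ) (hc : c ≠ 0) (hpc : p = C c) (hq : q ≠ 0)
    (hd : 1 ≤ q.natDegree) (j : ℕ) :
    (auxA p q j).natDegree ≤ j * (q.natDegree - 1) ∧
      (auxA p q j).coeff (j * (q.natDegree - 1)) ≠ 0 := by
  set d := q.natDegree with hdd
  have hlc : q.coeff d ≠ 0 := by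
    simpa [hdd, Polynomial.coeff_natDegree] using Polynomial.leadingCoeff_ne_zero.mpr hq
  have hdc : ((d - 1 : ℕ) : ℂ) = (d : ℂ) - 1 := by rw [Nat.cast_sub hd, Nat.cast_one]
  have hqd : (derivative q).coeff (d - 1) = q.coeff d * (d : ℂ) := by
    have h1 : d - 1 + 1 = d := by omega
    rw [Polynomial.coeff_derivative, h1, hdc]
    ring
  induction j with
  | zero => simpa [auxA, hpc] using hc
  | succ j ih =>
    obtain ⟨ih1, ih2⟩ := ih
    have hstep : auxA p q (j+1)
        = derivative (auxA p q j) * q - C ((j : ℂ) + 1) * auxA p q j * derivative q := rfl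
    set u := j * (d - 1) with hu
    set A := auxA p q j with hA
    have hsucc : (j + 1) * (d - 1) = u + (d - 1) := by rw [hu]; ring
    have hder : natDegree (derivative A) ≤ u - 1 :=
      (Polynomial.natDegree_derivative_le A).trans (Nat.sub_le_sub_right ih1 1)
    have hterm2 : (C ((j : ℂ) + 1) * A * derivative q).coeff (u + (d - 1))
        = ((j : ℂ) + 1) * A.coeff u * (q.coeff d * (d : ℂ)) := by
      rw [mul_assoc, Polynomial.coeff_C_mul]
      rw [Polynomial.coeff_mul_add_eq_of_natDegree_le ih1 (Polynomial.natDegree_derivative_le q), hqd]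
      ring
    have hterm2deg : (C ((j : ℂ) + 1) * A * derivative q).natDegree ≤ u + (d - 1) := by
      refine Polynomial.natDegree_mul_le.trans ?_
      have h1 := (Polynomial.natDegree_C_mul_le ((j : ℂ) + 1) A).trans ih1
      exact Nat.add_le_add h1 (Polynomial.natDegree_derivative_le q)
    by_cases hu0 : u = 0
    · have hAC : A = C (A.coeff 0) := Polynomial.eq_C_of_natDegree_le_zero (hu0 ▸ ih1)
      have hderA : derivative A = 0 := by rw [hAC]; simp
      constructor
      · rw [hsucc, hstep, hderA, zero_mul, zero_sub, Polynomial.natDegree_neg]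
        exact hterm2deg
      · rw [hsucc, hstep, hderA, zero_mul, zero_sub, Polynomial.coeff_neg, hterm2,
          neg_ne_zero, hu0]
        refine mul_ne_zero (mul_ne_zero ?_ (by rwa [← hu0])) (mul_ne_zero hlc ?_)
        · exact Nat.cast_add_one_ne_zero j
        · exact_mod_cast Nat.cast_ne_zero.mpr (show d ≠ 0 by omega)
    · have hu1 : 1 ≤ u := by omega
      have hsplit : u + (d - 1) = (u - 1) + d := by omega
      have huc : ((u - 1 : ℕ) : ℂ) = (u : ℂ) - 1 := by rw [Nat.cast_sub hu1, Nat.cast_one]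
      have hterm1 : (derivative A * q).coeff (u + (d - 1)) = A.coeff u * (u : ℂ) * q.coeff d := by
        rw [hsplit, Polynomial.coeff_mul_add_eq_of_natDegree_le hder le_rfl]
        have h2 : u - 1 + 1 = u := by omega
        rw [Polynomial.coeff_derivative, h2, huc, ← hdd]
        ring
      constructor
      · rw [hsucc, hstep]
        refine (Polynomial.natDegree_sub_le _ _).trans (max_le ?_ hterm2deg)
        refine Polynomial.natDegree_mul_le.trans ?_
        calc natDegree (derivative A) + natDegree q ≤ (u - 1) + d := Nat.add_le_add hder le_rfl
          _ ≤ u + (d - 1) := by omega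
      · rw [hsucc, hstep, Polynomial.coeff_sub, hterm1, hterm2]
        have hfin : A.coeff u * (u:ℂ) * q.coeff d - ((j:ℂ)+1) * A.coeff u * (q.coeff d * d)
            = A.coeff u * q.coeff d * ((u : ℂ) - ((j : ℂ) + 1) * d) := by ring
        rw [hfin]
        refine mul_ne_zero (mul_ne_zero ih2 hlc) ?_
        have hne : u ≠ (j + 1) * d := by
          have hlt : u < (j + 1) * d := by
            calc u = j * (d-1) := hu
            _ ≤ j * d := Nat.mul_le_mul_left j (Nat.sub_le d 1)
            _ < (j+1) * d := by nlinarith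
          omega
        intro h
        apply hne
        have : (u : ℂ) = (((j + 1) * d : ℕ) : ℂ) := by push_cast; linear_combination h
        exact_mod_cast this

lemma auxA_deriv (p q : Polynomial ℂ) (f : ℂ → ℂ)
    (hf : ∀ z, q.eval z ≠ 0 → f z = p.eval z / q.eval z) (j : ℕ) :
    ∀ z, q.eval z ≠ 0 → iteratedDeriv j f z = (auxA p q j).eval z / (q.eval z) ^ (j + 1) := by
  induction j with
  | zero =>
    intro z hz
    simpa [auxA, iteratedDeriv_zero] using hf z hz
  | succ j ih =>
    intro z hz
    have hU : IsOpen {w : ℂ | q.eval w ≠ 0} :=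
      isOpen_compl_singleton.preimage (q.continuous)
    have hev : iteratedDeriv j f =ᶠ[nhds z]
        fun w => (auxA p q j).eval w / (q.eval w) ^ (j + 1) :=
      Filter.eventuallyEq_of_mem (hU.mem_nhds hz) (fun w hw => ih w hw)
    rw [iteratedDeriv_succ, hev.deriv_eq]
    have h1 : HasDerivAt (fun w => (auxA p q j).eval w)
        ((derivative (auxA p q j)).eval z) z := Polynomial.hasDerivAt _ z
    have h2 : HasDerivAt (fun w => (q.eval w) ^ (j + 1))
        (((j : ℂ) + 1) * (q.eval z) ^ j * (derivative q).eval z) z := by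
      have := (Polynomial.hasDerivAt q z).fun_pow (j + 1)
      simpa using this
    have hne : (q.eval z) ^ (j + 1) ≠ 0 := pow_ne_zero _ hz
    rw [(h1.fun_div h2 hne).deriv]
    have hstep : auxA p q (j+1)
        = derivative (auxA p q j) * q - C ((j : ℂ) + 1) * auxA p q j * derivative q := rfl
    rw [hstep]
    simp only [eval_sub, eval_mul, eval_C]
    field_simp
    ring

lemma radical_card (w : Polynomial ℂ) (hw : w ≠ 0) :
    (radical w).natDegree ≤ w.roots.toFinset.card := by
  have hfacts : ∀ a ∈ primeFactors w, Prime a ∧ a ∣ w ∧ a.Monic ∧ a.natDegree = 1 := by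
    intro a ha
    have hmem : a ∈ normalizedFactors w := by exact mem_primeFactors.mp ha
    have hpr : Prime a := prime_of_normalized_factor a hmem
    have hdvd : a ∣ w := dvd_of_mem_normalizedFactors hmem
    have hnorm : normalize a = a := normalize_normalized_factor a hmem
    have hmon : a.Monic := hnorm ▸ Polynomial.monic_normalize hpr.ne_zero
    have hdeg : a.degree = 1 := IsAlgClosed.degree_eq_one_of_irreducible ℂ hpr.irreducible
    exact ⟨hpr, hdvd, hmon, Polynomial.natDegree_eq_of_degree_eq_some hdeg⟩
  have hdeg : (radical w).natDegree = (primeFactors w).card := by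
    have hrw : radical w = ∏ a ∈ primeFactors w, a := rfl
    rw [hrw, Polynomial.natDegree_prod _ _ (fun a ha => (hfacts a ha).1.ne_zero)]
    rw [Finset.card_eq_sum_ones]
    exact Finset.sum_congr rfl (fun a ha => by simp [(hfacts a ha).2.2.2])
  rw [hdeg]
  refine Finset.card_le_card_of_injOn (fun a => -(a.coeff 0)) ?_ ?_
  · intro a ha
    obtain ⟨hpr, hdvd, hmon, h1⟩ := hfacts a ha
    have haX : a = X + C (a.coeff 0) := hmon.eq_X_add_C h1
    have hroot : a.IsRoot (-(a.coeff 0)) := by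
      rw [haX]; simp [Polynomial.IsRoot]
    obtain ⟨v, rfl⟩ := hdvd
    refine Multiset.mem_toFinset.mpr ((Polynomial.mem_roots hw).mpr ?_)
    show Polynomial.IsRoot _ _
    simp [Polynomial.IsRoot, Polynomial.eval_mul, hroot.eq_zero]
  · intro a ha b hb hab
    obtain ⟨_, _, hmona, h1a⟩ := hfacts a ha
    obtain ⟨_, _, hmonb, h1b⟩ := hfacts b hb
    rw [hmona.eq_X_add_C h1a, hmonb.eq_X_add_C h1b]
    simpa using neg_injective hab

/-- Lemma 2.6: if `f = p/q` is a non-constant rational function without zeros in `ℂ`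
(so `p` never vanishes), and `P ≢ 0` is a polynomial, then `M[f] - P` has at least
`Γ_M = ∑ (j+1) n_j` distinct zeros in `ℂ`. -/
theorem stmt_17 (k : ℕ) (hk : 1 ≤ k) (n : ℕ → ℕ)
    (hγ1 : 1 ≤ ∑ j ∈ Finset.range (k + 1), n j)
    (Γ : ℕ) (hΓ : Γ = ∑ j ∈ Finset.range (k + 1), (j + 1) * n j)
    (p q : Polynomial ℂ) (hq : q ≠ 0)
    (hp : ∀ z : ℂ, p.eval z ≠ 0)
    (hnc : ¬∃ c : ℂ, p = Polynomial.C c * q)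
    (f : ℂ → ℂ)
    (hf : ∀ z : ℂ, q.eval z ≠ 0 → f z = p.eval z / q.eval z)
    (P : Polynomial ℂ) (hP : P ≠ 0) :
    Γ ≤ Set.ncard {z : ℂ | q.eval z ≠ 0 ∧
      ∏ j ∈ Finset.range (k + 1), (iteratedDeriv j f z) ^ (n j) = P.eval z} := by
  -- p is a nonzero constant
  obtain ⟨c, hc, hpc⟩ : ∃ c : ℂ, c ≠ 0 ∧ p = C c := by
    have hdeg : p.natDegree = 0 := by
      by_contra h
      obtain ⟨z, hz⟩ := Complex.exists_root
        (Polynomial.natDegree_pos_iff_degree_pos.mp (Nat.pos_of_ne_zero h))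
      exact hp z hz
    have hpeq := Polynomial.eq_C_of_natDegree_eq_zero hdeg
    refine ⟨p.coeff 0, ?_, hpeq⟩
    have h0 := hp 0
    rw [hpeq] at h0
    simpa using h0
  -- q is non-constant
  have hd : 1 ≤ q.natDegree := by
    by_contra h
    push_neg at h
    obtain ⟨c0, hc0, hq0⟩ : ∃ c0 : ℂ, c0 ≠ 0 ∧ q = C c0 := by
      have hq0 : q = C (q.coeff 0) := Polynomial.eq_C_of_natDegree_le_zero (by omega)
      exact ⟨q.coeff 0, fun hh => hq (by rw [hq0, hh, map_zero]), hq0⟩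
    exact hnc ⟨c / c0, by rw [hpc, hq0, ← Polynomial.C_mul, div_mul_cancel₀ c hc0]⟩
  set d := q.natDegree with hdd
  set nn := ∑ j ∈ Finset.range (k+1), n j with hnn
  set J := ∑ j ∈ Finset.range (k+1), j * n j with hJdef
  have hΓnn : Γ = J + nn := by
    rw [hΓ, hJdef, hnn, ← Finset.sum_add_distrib]
    exact Finset.sum_congr rfl fun j _ => by ring
  have hnn1 : 1 ≤ nn := hγ1
  -- numerator polynomial B
  have hA := fun j => auxA_deg p q c hc hpc hq hd j
  have hA0 : ∀ j, auxA p q j ≠ 0 := by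
    intro j h
    exact (hA j).2 (by rw [h]; simp)
  set B := ∏ j ∈ Finset.range (k+1), (auxA p q j) ^ (n j) with hB
  have hB0 : B ≠ 0 :=
    Finset.prod_ne_zero_iff.mpr (fun j _ => pow_ne_zero _ (hA0 j))
  have hBdeg : B.natDegree ≤ J * (d - 1) := by
    refine (Polynomial.natDegree_prod_le _ _).trans ?_
    rw [hJdef, Finset.sum_mul]
    refine Finset.sum_le_sum fun j _ => ?_
    rw [Polynomial.natDegree_pow]
    calc n j * (auxA p q j).natDegree ≤ n j * (j * (d-1)) :=
          Nat.mul_le_mul_left _ (hA j).1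
      _ = j * n j * (d-1) := by ring
  set Q := q ^ Γ with hQ
  have hQ0 : Q ≠ 0 := pow_ne_zero _ hq
  have hQdeg : Q.natDegree = Γ * d := by rw [hQ, Polynomial.natDegree_pow]
  -- reduce the fraction B / q^Γ
  set D := GCDMonoid.gcd B Q with hD
  have hD0 : D ≠ 0 := gcd_ne_zero_of_left hB0
  obtain ⟨N', hN'⟩ : D ∣ B := gcd_dvd_left B Q
  obtain ⟨Q', hQ'⟩ : D ∣ Q := gcd_dvd_right B Q
  have hN'0 : N' ≠ 0 := by
    rintro rfl; rw [mul_zero] at hN'; exact hB0 hN'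
  have hQ'0 : Q' ≠ 0 := by
    rintro rfl; rw [mul_zero] at hQ'; exact hQ0 hQ'
  have hcop : IsCoprime N' Q' := by
    have h1 := isCoprime_div_gcd_div_gcd (p := B) (q := Q) hQ0
    have e1 : B / D = N' := mul_left_cancel₀ hD0
      (by rw [EuclideanDomain.mul_div_cancel' hD0 ⟨N', hN'⟩]; exact hN')
    have e2 : Q / D = Q' := mul_left_cancel₀ hD0
      (by rw [EuclideanDomain.mul_div_cancel' hD0 ⟨Q', hQ'⟩]; exact hQ')
    rw [← hD] at h1
    rwa [e1, e2] at h1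
  -- degree bookkeeping
  have hdegBN : B.natDegree = D.natDegree + N'.natDegree := by
    rw [hN', Polynomial.natDegree_mul hD0 hN'0]
  have hdegQQ : Γ * d = D.natDegree + Q'.natDegree := by
    rw [← hQdeg, hQ', Polynomial.natDegree_mul hD0 hQ'0]
  have hnnd : 0 < nn * d := Nat.mul_pos (by omega) (by omega)
  have hgd1 : Γ * d = J * d + nn * d := by rw [hΓnn]; ring
  have hgd2 : J * (d - 1) + J = J * d := by
    have h1 : d - 1 + 1 = d := by omega
    calc J * (d - 1) + J = J * ((d - 1) + 1) := by ring
      _ = J * d := by rw [h1]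
  have hBltQ : B.natDegree < Γ * d := by
    have h1 : J * (d-1) < Γ * d := by omega
    omega
  have hNQdeg : N'.natDegree < Q'.natDegree := by omega
  -- R
  set R := N' - P * Q' with hRdef
  have hR0 : R ≠ 0 := by
    intro h
    have hNPQ : N' = P * Q' := by
      have := sub_eq_zero.mp h; exact this
    have := Polynomial.natDegree_mul hP hQ'0
    rw [← hNPQ] at this
    omega
  set g := GCDMonoid.gcd R P with hg
  have hg0 : g ≠ 0 := gcd_ne_zero_of_left hR0
  obtain ⟨a, hga⟩ : g ∣ R := gcd_dvd_left R P
  obtain ⟨P₁, hgP⟩ : g ∣ P := gcd_dvd_right R P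
  have hgN : g ∣ N' := by
    have hN'e : N' = R + P * Q' := by rw [hRdef]; ring
    rw [hN'e]
    exact dvd_add (gcd_dvd_left R P) (Dvd.dvd.mul_right (gcd_dvd_right R P) Q')
  obtain ⟨Nc, hgNc⟩ := hgN
  have ha0 : a ≠ 0 := by rintro rfl; rw [mul_zero] at hga; exact hR0 hga
  have hP₁0 : P₁ ≠ 0 := by rintro rfl; rw [mul_zero] at hgP; exact hP hgP
  have hNc0 : Nc ≠ 0 := by rintro rfl; rw [mul_zero] at hgNc; exact hN'0 hgNc
  set b := P₁ * Q' with hb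
  have hb0 : b ≠ 0 := mul_ne_zero hP₁0 hQ'0
  have hsum : a + b + (-Nc) = 0 := by
    apply mul_left_cancel₀ hg0
    rw [mul_zero]
    calc g * (a + b + -Nc) = g * a + (g * P₁) * Q' - g * Nc := by rw [hb]; ring
      _ = R + P * Q' - N' := by rw [← hga, ← hgP, ← hgNc]
      _ = 0 := by rw [hRdef]; ring
  have hNc : Nc = a + b := by linear_combination -hsum
  -- coprimality
  have haP : IsCoprime a P₁ := by
    have h1 := isCoprime_div_gcd_div_gcd (p := R) (q := P) hP
    have e1 : R / g = a := mul_left_cancel₀ hg0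
      (by rw [EuclideanDomain.mul_div_cancel' hg0 ⟨a, hga⟩]; exact hga)
    have e2 : P / g = P₁ := mul_left_cancel₀ hg0
      (by rw [EuclideanDomain.mul_div_cancel' hg0 ⟨P₁, hgP⟩]; exact hgP)
    rw [← hg] at h1
    rwa [e1, e2] at h1
  have hRQ : IsCoprime R Q' := by
    have hN'e : N' = R + Q' * P := by rw [hRdef]; ring
    have h1 : IsCoprime (R + Q' * P) Q' := hN'e ▸ hcop
    have h2 := h1.add_mul_left_left (-P)
    have h3 : R + Q' * P + Q' * (-P) = R := by ring
    rwa [h3] at h2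
  have haQ : IsCoprime a Q' :=
    IsCoprime.of_isCoprime_of_dvd_left hRQ ⟨g, by rw [hga]; ring⟩
  have hab : IsCoprime a b := haP.mul_right haQ
  have hbc : IsCoprime b (-Nc) := by
    have h2 := hab.symm.add_mul_left_right 1
    rw [mul_one] at h2
    have h3 : -Nc = -(a + b) := by rw [hNc]
    rw [h3]
    exact h2.neg_right
  have hca : IsCoprime (-Nc) a := by
    have h2 := hab.symm.add_mul_left_left 1
    rw [mul_one] at h2
    have h3 : -Nc = -(b + a) := by rw [hNc]; ring_nf
    rw [h3]
    exact h2.neg_left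
  -- Mason-Stothers
  have habc := Polynomial.abc ha0 hb0 (neg_ne_zero.mpr hNc0) hab hsum
  -- zero set
  classical
  set Zfin := R.roots.toFinset.filter (fun z => q.eval z ≠ 0) with hZfin
  set t := Zfin.card with ht
  -- identify the zero set
  have hDQz : ∀ z : ℂ, q.eval z ≠ 0 → (D.eval z ≠ 0 ∧ Q'.eval z ≠ 0) := by
    intro z hz
    have h1 : Q.eval z ≠ 0 := by
      rw [hQ, Polynomial.eval_pow]; exact pow_ne_zero _ hz
    rw [hQ', Polynomial.eval_mul] at h1
    exact ⟨left_ne_zero_of_mul h1, right_ne_zero_of_mul h1⟩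
  have hprod_iff : ∀ z : ℂ, q.eval z ≠ 0 →
      ((∏ j ∈ Finset.range (k + 1), (iteratedDeriv j f z) ^ (n j) = P.eval z) ↔
        R.eval z = 0) := by
    intro z hz
    obtain ⟨hDz, hQz⟩ := hDQz z hz
    have h1 : ∏ j ∈ Finset.range (k+1), (iteratedDeriv j f z) ^ (n j)
        = B.eval z / (q.eval z) ^ Γ := by
      rw [hB, Polynomial.eval_prod, hΓ, ← Finset.prod_pow_eq_pow_sum,
        ← Finset.prod_div_distrib]
      refine Finset.prod_congr rfl fun j hj => ?_
      rw [auxA_deriv p q f hf j z hz, Polynomial.eval_pow, div_pow, ← pow_mul]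
    have h2 : B.eval z / (q.eval z) ^ Γ = N'.eval z / Q'.eval z := by
      rw [hN', Polynomial.eval_mul]
      have h3 : (q.eval z) ^ Γ = D.eval z * Q'.eval z := by
        rw [← Polynomial.eval_pow, ← hQ, hQ', Polynomial.eval_mul]
      rw [h3, mul_div_mul_left _ _ hDz]
    rw [h1, h2, div_eq_iff hQz, hRdef]
    simp only [Polynomial.eval_sub, Polynomial.eval_mul, sub_eq_zero]
  have hset : {z : ℂ | q.eval z ≠ 0 ∧
      ∏ j ∈ Finset.range (k + 1), (iteratedDeriv j f z) ^ (n j) = P.eval z} = ↑Zfin := by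
    ext z
    simp only [Set.mem_setOf_eq, Finset.mem_coe, hZfin, Finset.mem_filter,
      Multiset.mem_toFinset, Polynomial.mem_roots hR0, Polynomial.IsRoot.def]
    constructor
    · rintro ⟨hz, hprod⟩
      exact ⟨(hprod_iff z hz).mp hprod, hz⟩
    · rintro ⟨hroot, hz⟩
      exact ⟨hz, (hprod_iff z hz).mpr hroot⟩
  have hncard : Set.ncard {z : ℂ | q.eval z ≠ 0 ∧
      ∏ j ∈ Finset.range (k + 1), (iteratedDeriv j f z) ^ (n j) = P.eval z} = t := by
    rw [hset, Set.ncard_coe_finset]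
  rw [hncard]
  -- rule out the degenerate branch of Mason-Stothers
  rcases habc with ⟨-, hbrad, -⟩ | ⟨-, hbder, -⟩
  swap
  · exfalso
    have hb0' : b.natDegree = 0 := Polynomial.natDegree_eq_zero_of_derivative_eq_zero hbder
    have := Polynomial.natDegree_mul hP₁0 hQ'0
    rw [← hb] at this
    omega
  -- root counting
  have hw0 : a * b * -Nc ≠ 0 := mul_ne_zero (mul_ne_zero ha0 hb0) (neg_ne_zero.mpr hNc0)
  have hroots_w : (a * b * -Nc).roots.toFinset
      = a.roots.toFinset ∪ b.roots.toFinset ∪ Nc.roots.toFinset := by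
    rw [Polynomial.roots_mul hw0, Polynomial.roots_mul (mul_ne_zero ha0 hb0),
      Polynomial.roots_neg, Multiset.toFinset_add, Multiset.toFinset_add]
  set s₁ := (q.roots.toFinset \ Q'.roots.toFinset).card with hs₁
  set rQ := Q'.roots.toFinset.card with hrQ
  have h_a_roots : a.roots.toFinset ⊆ Zfin ∪ (q.roots.toFinset \ Q'.roots.toFinset) := by
    intro z hz
    have hza : a.eval z = 0 :=
      (Polynomial.mem_roots ha0).mp (Multiset.mem_toFinset.mp hz)
    have hzR : R.eval z = 0 := by rw [hga, Polynomial.eval_mul, hza, mul_zero]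
    by_cases hzq : q.eval z = 0
    · refine Finset.mem_union_right _ (Finset.mem_sdiff.mpr ⟨?_, ?_⟩)
      · exact Multiset.mem_toFinset.mpr ((Polynomial.mem_roots hq).mpr hzq)
      · intro hmem
        have hQz : Q'.eval z = 0 :=
          (Polynomial.mem_roots hQ'0).mp (Multiset.mem_toFinset.mp hmem)
        have hNz : N'.eval z = 0 := by
          have hN'e : N' = R + P * Q' := by rw [hRdef]; ring
          rw [hN'e, Polynomial.eval_add, Polynomial.eval_mul, hzR, hQz, mul_zero, add_zero]
        obtain ⟨u, v, huv⟩ := hcop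
        have := congrArg (Polynomial.eval z) huv
        simp only [Polynomial.eval_add, Polynomial.eval_mul, Polynomial.eval_one,
          hNz, hQz, mul_zero, add_zero] at this
        exact one_ne_zero this.symm
    · refine Finset.mem_union_left _ (Finset.mem_filter.mpr ⟨?_, hzq⟩)
      exact Multiset.mem_toFinset.mpr ((Polynomial.mem_roots hR0).mpr hzR)
  have h_a_card : a.roots.toFinset.card ≤ t + s₁ :=
    (Finset.card_le_card h_a_roots).trans (Finset.card_union_le _ _)
  have h_b_card : b.roots.toFinset.card ≤ P₁.natDegree + rQ := by
    have h1 : b.roots.toFinset = P₁.roots.toFinset ∪ Q'.roots.toFinset := by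
      rw [hb, Polynomial.roots_mul hb0, Multiset.toFinset_add]
    rw [h1]
    refine (Finset.card_union_le _ _).trans ?_
    have h2 : P₁.roots.toFinset.card ≤ P₁.natDegree :=
      (Multiset.toFinset_card_le _).trans (Polynomial.card_roots' P₁)
    omega
  have h_c_card : Nc.roots.toFinset.card ≤ N'.natDegree := by
    have h2 : Nc.roots.toFinset.card ≤ Nc.natDegree :=
      (Multiset.toFinset_card_le _).trans (Polynomial.card_roots' Nc)
    have h3 : Nc.natDegree ≤ N'.natDegree :=
      Polynomial.natDegree_le_of_dvd ⟨g, by rw [hgNc]; ring⟩ hN'0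
    omega
  have h_sub : Q'.roots.toFinset ⊆ q.roots.toFinset := by
    intro z hz
    have hQz : Q'.eval z = 0 :=
      (Polynomial.mem_roots hQ'0).mp (Multiset.mem_toFinset.mp hz)
    have hqz : q.eval z = 0 := by
      have h1 : Q.eval z = 0 := by rw [hQ', Polynomial.eval_mul, hQz, mul_zero]
      rw [hQ, Polynomial.eval_pow] at h1
      exact pow_eq_zero_iff (by omega) |>.mp h1
    exact Multiset.mem_toFinset.mpr ((Polynomial.mem_roots hq).mpr hqz)
  have h_sd : s₁ + rQ ≤ d := by
    rw [hs₁, hrQ, Finset.card_sdiff_add_card_eq_card h_sub]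
    exact (Multiset.toFinset_card_le _).trans (Polynomial.card_roots' q)
  -- assemble
  have hdegb : b.natDegree = P₁.natDegree + Q'.natDegree := by
    rw [hb, Polynomial.natDegree_mul hP₁0 hQ'0]
  have hrad : (radical (a * b * -Nc)).natDegree
      ≤ (t + s₁) + (P₁.natDegree + rQ) + N'.natDegree := by
    refine (radical_card _ hw0).trans ?_
    rw [hroots_w]
    calc (a.roots.toFinset ∪ b.roots.toFinset ∪ Nc.roots.toFinset).card
        ≤ (a.roots.toFinset ∪ b.roots.toFinset).card + Nc.roots.toFinset.card :=
          Finset.card_union_le _ _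
      _ ≤ a.roots.toFinset.card + b.roots.toFinset.card + Nc.roots.toFinset.card := by
          have := Finset.card_union_le a.roots.toFinset b.roots.toFinset
          omega
      _ ≤ (t + s₁) + (P₁.natDegree + rQ) + N'.natDegree := by omega
  have hmason : b.natDegree + 1 ≤ (radical (a * b * -Nc)).natDegree := hbrad
  have hkey : nn + d ≤ nn * d + 1 := by
    have h1 : d - 1 ≤ nn * (d - 1) := Nat.le_mul_of_pos_left _ (by omega)
    have h2 : nn * d = nn * (d - 1) + nn := by
      have h3 : d - 1 + 1 = d := by omega
      calc nn * d = nn * ((d - 1) + 1) := by rw [h3]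
        _ = nn * (d - 1) + nn := by ring
    omega
  omega
end
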